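/- Let β > 0 and γ > 0 with γ large enough that β − 1/(2γ) > 0. Define the local regularization φ_γ' : ℝ → ℝ by φ_γ'(x) = β·x/|x| if γ|x| ≥ β + 1/(2γ); φ_γ'(x) = (x/|x|)(β − (γ/2)(β − γ|x| + 1/(2γ))²) if β − 1/(2γ) ≤ γ|x| ≤ β + 1/(2γ); and φ_γ'(x) = γx if γ|x| ≤ β − 1/(2γ). Then φ_γ' is continuously differentiable on ℝ, monotone nondecreasing, and satisfies |φ_γ'(x)| ≤ β for all x ∈ ℝ. -/

import Mathlib

set_option maxHeartbeats 1000000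

/-- The tailored local regularization `φ_γ'` of the sign of `x ↦ β|x|`: it is piecewise defined,
continuously differentiable, monotone nondecreasing, and bounded by `β` in absolute value. -/
theorem stmt_10 (β γ : ℝ) (hβ : 0 < β) (hγ : 0 < γ) (hlarge : 0 < β - 1 / (2 * γ))
    (φ : ℝ → ℝ)
    (hφ : ∀ x : ℝ, φ x =
      if β + 1 / (2 * γ) ≤ γ * |x| then β * (x / |x|)
      else if β - 1 / (2 * γ) ≤ γ * |x| then
        (x / |x|) * (β - (γ / 2) * (β - γ * |x| + 1 / (2 * γ)) ^ 2)
      else γ * x) :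
    ContDiff ℝ 1 φ ∧ Monotone φ ∧ ∀ x : ℝ, |φ x| ≤ β := by
  have hγ' : (0:ℝ) < 1 / (2 * γ) := by positivity
  set a : ℝ := (β - 1 / (2 * γ)) / γ with ha_def
  set b : ℝ := (β + 1 / (2 * γ)) / γ with hb_def
  have ha_pos : 0 < a := div_pos hlarge hγ
  have hga : γ * a = β - 1 / (2 * γ) := by rw [ha_def]; field_simp
  have hgb : γ * b = β + 1 / (2 * γ) := by rw [hb_def]; field_simp
  have hab : a < b := by
    rw [ha_def, hb_def, div_lt_div_iff₀ hγ hγ]; nlinarith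
  -- oddness
  have h_odd : ∀ y : ℝ, φ (-y) = -φ y := by
    intro y
    rw [hφ, hφ]
    simp only [abs_neg]
    split_ifs <;> ring
  -- value lemmas
  have L3 : ∀ y : ℝ, b ≤ y → φ y = β := by
    intro y hy
    have hy0 : 0 < y := lt_of_lt_of_le (ha_pos.trans hab) hy
    rw [hφ, abs_of_pos hy0,
      if_pos (by nlinarith [mul_le_mul_of_nonneg_left hy hγ.le]),
      div_self hy0.ne', mul_one]
  have L2 : ∀ y : ℝ, a ≤ y → y ≤ b →
      φ y = β - (γ / 2) * (β - γ * y + 1 / (2 * γ)) ^ 2 := by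
    intro y h1 h2
    have hy0 : 0 < y := lt_of_lt_of_le ha_pos h1
    rw [hφ, abs_of_pos hy0, div_self hy0.ne']
    rcases le_or_gt (β + 1 / (2 * γ)) (γ * y) with h | h
    · have : γ * y = β + 1 / (2 * γ) := le_antisymm (by nlinarith) h
      rw [if_pos h, this]; ring
    · rw [if_neg (not_le.mpr h), if_pos (by nlinarith), one_mul]
  have L1 : ∀ y : ℝ, |y| ≤ a → φ y = γ * y := by
    intro y hy
    rcases lt_or_eq_of_le hy with h | h
    · rw [hφ, if_neg (by nlinarith [abs_nonneg y]), if_neg (by nlinarith [abs_nonneg y])]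
    · -- |y| = a
      have hLa : φ a = γ * a := by
        rw [L2 a le_rfl hab.le, hga]; field_simp; ring
      rcases (abs_eq ha_pos.le).mp h with rfl | rfl
      · exact hLa
      · rw [h_odd a, hLa]; ring
  -- the continuous candidate derivative
  set D : ℝ → ℝ := fun x => min γ (max 0 (γ ^ 2 * (β + 1 / (2 * γ) - γ * |x|))) with hD_def
  have hD_nonneg : ∀ x, 0 ≤ D x := fun x => le_min hγ.le (le_max_left _ _)
  have hD_cont : Continuous D := by
    apply Continuous.min continuous_const
    exact Continuous.max continuous_const (by continuity)
  -- values of D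
  have hD1 : ∀ x : ℝ, |x| ≤ a → D x = γ := by
    intro x hx
    apply min_eq_left
    apply le_max_of_le_right
    have h1 : γ * |x| ≤ β - 1 / (2 * γ) := by nlinarith [mul_le_mul_of_nonneg_left hx hγ.le]
    have hc2 : γ ^ 2 * (1 / (2 * γ)) = γ / 2 := by field_simp
    nlinarith [hc2, mul_le_mul_of_nonneg_left
      (show 2 * (1 / (2 * γ)) ≤ β + 1 / (2 * γ) - γ * |x| by linarith) (sq_nonneg γ)]
  have hD2 : ∀ x : ℝ, a ≤ x → x ≤ b → D x = γ ^ 2 * (β - γ * x + 1 / (2 * γ)) := by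
    intro x h1 h2
    have hx0 : 0 < x := ha_pos.trans_le h1
    have e1 : γ * x ≤ β + 1 / (2 * γ) := by nlinarith [mul_le_mul_of_nonneg_left h2 hγ.le]
    have e2 : β - 1 / (2 * γ) ≤ γ * x := by nlinarith [mul_le_mul_of_nonneg_left h1 hγ.le]
    have hc2 : γ ^ 2 * (1 / (2 * γ)) = γ / 2 := by field_simp
    have e3 : 0 ≤ γ ^ 2 * (β + 1 / (2 * γ) - γ * x) := by nlinarith [sq_nonneg γ]
    have e4 : γ ^ 2 * (β + 1 / (2 * γ) - γ * x) ≤ γ := by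
      have e5 : β + 1 / (2 * γ) - γ * x ≤ 2 * (1 / (2 * γ)) := by linarith
      nlinarith [hc2, mul_le_mul_of_nonneg_left e5 (sq_nonneg γ)]
    rw [hD_def]
    simp only [abs_of_pos hx0]
    rw [max_eq_right e3, min_eq_right e4]
    ring
  have hD3 : ∀ x : ℝ, b ≤ x → D x = 0 := by
    intro x hx
    have hx0 : 0 < x := (ha_pos.trans hab).trans_le hx
    rw [hD_def]
    simp only [abs_of_pos hx0]
    rw [max_eq_left (by nlinarith [mul_le_mul_of_nonneg_left hx hγ.le, sq_nonneg γ]),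
      min_eq_right hγ.le]
  have hD_even : ∀ x : ℝ, D (-x) = D x := by intro x; simp [hD_def]
  -- the key derivative computation for nonnegative points
  have key : ∀ x : ℝ, 0 ≤ x → HasDerivAt φ (D x) x := by
    intro x hx
    have h1 : HasDerivWithinAt φ (D x) (Set.Icc (-a) a) x := by
      rcases le_or_gt x a with h | h
      · have hmodel : HasDerivWithinAt (fun y => γ * y) γ (Set.Icc (-a) a) x := by
          simpa using ((hasDerivAt_id x).const_mul γ).hasDerivWithinAt
        rw [hD1 x (abs_le.mpr ⟨by linarith, h⟩)]
        exact hmodel.congr (fun y hy => L1 y (abs_le.mpr ⟨hy.1, hy.2⟩))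
          (L1 x (abs_le.mpr ⟨by linarith, h⟩))
      · exact HasFDerivWithinAt.of_notMem_closure (by
          rw [isClosed_Icc.closure_eq]; exact fun hc => absurd hc.2 (not_le.mpr h))
    have h2 : HasDerivWithinAt φ (D x) (Set.Icc a b) x := by
      rcases le_or_gt a x with h | h
      · rcases le_or_gt x b with h' | h'
        · have hmodel : HasDerivAt (fun y => β - (γ / 2) * (β - γ * y + 1 / (2 * γ)) ^ 2)
              (γ ^ 2 * (β - γ * x + 1 / (2 * γ))) x := by
            have hf : HasDerivAt (fun y : ℝ => β - γ * y + 1 / (2 * γ)) (-γ) x := by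
              simpa using (((hasDerivAt_id x).const_mul γ).const_sub β).add_const (1 / (2 * γ))
            have := ((hf.pow 2).const_mul (γ / 2)).const_sub β
            refine this.congr_deriv ?_
            simp; ring
          rw [hD2 x h h']
          exact hmodel.hasDerivWithinAt.congr (fun y hy => L2 y hy.1 hy.2) (L2 x h h')
        · exact HasFDerivWithinAt.of_notMem_closure (by
            rw [isClosed_Icc.closure_eq]; exact fun hc => absurd hc.2 (not_le.mpr h'))
      · exact HasFDerivWithinAt.of_notMem_closure (by
          rw [isClosed_Icc.closure_eq]; exact fun hc => absurd hc.1 (not_le.mpr h))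
    have h3 : HasDerivWithinAt φ (D x) (Set.Ici b) x := by
      rcases le_or_gt b x with h | h
      · rw [hD3 x h]
        exact (hasDerivWithinAt_const x _ β).congr (fun y hy => L3 y hy) (L3 x h)
      · exact HasFDerivWithinAt.of_notMem_closure (by
          rw [isClosed_Ici.closure_eq]; exact not_le.mpr h)
    have hu := h1.union (h2.union h3)
    rw [Set.Icc_union_Ici_eq_Ici hab.le, Set.Icc_union_Ici_eq_Ici (by linarith : -a ≤ a)] at hu
    exact hu.hasDerivAt (Ici_mem_nhds (by linarith [ha_pos] : -a < x))
  -- extend to all points by oddness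
  have key' : ∀ x : ℝ, HasDerivAt φ (D x) x := by
    intro x
    rcases le_or_gt 0 x with h | h
    · exact key x h
    · have hodd : φ = fun y => -φ (-y) := by
        funext y; rw [h_odd y]; ring
      have h1 : HasDerivAt (fun y : ℝ => φ (-y)) (D (-x) * (-1)) x :=
        (key (-x) (by linarith)).comp x (by simpa using hasDerivAt_neg x)
      have h2 : HasDerivAt (fun y : ℝ => -φ (-y)) (-(D (-x) * (-1))) x := h1.neg
      rw [hodd]
      convert h2 using 1
      rw [hD_even]; ring
  have hdiff : Differentiable ℝ φ := fun x => (key' x).differentiableAt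
  have hderiv : deriv φ = D := funext fun x => (key' x).deriv
  refine ⟨contDiff_one_iff_deriv.mpr ⟨hdiff, by rw [hderiv]; exact hD_cont⟩,
    monotone_of_deriv_nonneg hdiff (fun x => by rw [hderiv]; exact hD_nonneg x), ?_⟩
  -- the bound
  intro x
  rw [hφ x]
  split_ifs with h1 h2
  · have hx0 : x ≠ 0 := by
      intro h; rw [h, abs_zero, mul_zero] at h1; nlinarith
    have habs : abs (x / |x|) = 1 := by
      rw [abs_div, abs_abs, div_self (abs_ne_zero.mpr hx0)]
    rw [abs_mul, habs, mul_one, abs_of_pos hβ]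
  · have hx0 : x ≠ 0 := by
      intro h; rw [h, abs_zero, mul_zero] at h2; nlinarith
    have habs : abs (x / |x|) = 1 := by
      rw [abs_div, abs_abs, div_self (abs_ne_zero.mpr hx0)]
    rw [abs_mul, habs, one_mul]
    have hu1 : 0 ≤ β - γ * |x| + 1 / (2 * γ) := by
      push_neg at h1; linarith
    have hu2 : β - γ * |x| + 1 / (2 * γ) ≤ 2 * (1 / (2 * γ)) := by linarith
    have hq : (γ / 2) * (β - γ * |x| + 1 / (2 * γ)) ^ 2 ≤ 1 / (2 * γ) := by
      have h3 : (β - γ * |x| + 1 / (2 * γ)) ^ 2 ≤ (2 * (1 / (2 * γ))) ^ 2 := by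
        apply sq_le_sq' (by linarith) hu2
      have h5 : γ / 2 * (2 * (1 / (2 * γ))) ^ 2 = 1 / (2 * γ) := by
        field_simp
      nlinarith [mul_le_mul_of_nonneg_left h3 (by positivity : (0:ℝ) ≤ γ / 2)]
    have hq0 : 0 ≤ (γ / 2) * (β - γ * |x| + 1 / (2 * γ)) ^ 2 := by positivity
    rw [abs_le]
    constructor <;> linarith
  · push_neg at h2
    rw [abs_mul, abs_of_pos hγ]
    linarith
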